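/- Let α, β > 0, set C := β(1 + √(1 + α/β)) and r₁ := √(log(2 + 2√(1 + α/β))). Then: (a) for every r ≥ 0, 1 − (2C/β) e^{−r²} < 0 if and only if r < r₁; and (b) for every N ≥ 1, with v(x) = C e^{‖x‖²} − C and the approximate closed-loop vector field h(x) = (1 − (2C/β) e^{−‖x‖²}) ‖x‖² x on ℝ^N, one has ⟨∇v(x), h(x)⟩ < 0 for every x with 0 < ‖x‖ < r₁. -/

import Mathlib

/-- Stability region of the approximate (quadratic-value-function) closed loop
of the academic model problem: with `C = β(1 + √(1+α/β))` and
`r₁ = √(log(2 + 2√(1+α/β)))`, (a) the damping factor `1 − (2C/β)e^{−r²}` is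
negative exactly for `r < r₁`, and (b) the true value function
`v(x) = C e^{‖x‖²} − C` (with gradient `2C e^{‖x‖²}x`) is a Lyapunov function
for the approximate closed-loop field `h(x) = (1 − (2C/β)e^{−‖x‖²})‖x‖² x`
on the punctured ball `0 < ‖x‖ < r₁`. -/
theorem academic_approximate_stability (α β : ℝ) (hα : 0 < α) (hβ : 0 < β) :
    let C : ℝ := β * (1 + Real.sqrt (1 + α / β))
    let r₁ : ℝ := Real.sqrt (Real.log (2 + 2 * Real.sqrt (1 + α / β)))
    (∀ r : ℝ, 0 ≤ r →
      (1 - 2 * C / β * Real.exp (-r ^ 2) < 0 ↔ r < r₁)) ∧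
    (∀ N : ℕ, 1 ≤ N → ∀ x : EuclideanSpace ℝ (Fin N),
      0 < ‖x‖ → ‖x‖ < r₁ →
      (inner ℝ ((2 * C * Real.exp (‖x‖ ^ 2)) • x)
        (((1 - 2 * C / β * Real.exp (-‖x‖ ^ 2)) * ‖x‖ ^ 2) • x) : ℝ) < 0) := by
  intro C r₁
  set s : ℝ := Real.sqrt (1 + α / β) with hs
  have hs1 : 1 < s := by
    have := div_pos hα hβ
    exact (Real.lt_sqrt (by norm_num)).mpr (by nlinarith)
  set K : ℝ := 2 + 2 * s with hK
  have hK2 : 2 < K := by nlinarith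
  have hK0 : 0 < K := by linarith
  have hCK : 2 * C / β = K := by
    rw [show C = β * (1 + s) from rfl, mul_comm β (1 + s), ← mul_assoc,
      mul_div_assoc, div_self hβ.ne', mul_one, hK]; ring
  have hlogK : 0 < Real.log K := Real.log_pos (by linarith)
  have key : ∀ r : ℝ, 0 ≤ r →
      (1 - 2 * C / β * Real.exp (-r ^ 2) < 0 ↔ r < r₁) := by
    intro r hr
    rw [hCK]
    have : K * Real.exp (-r ^ 2) = Real.exp (Real.log K - r ^ 2) := by
      rw [Real.exp_sub, Real.exp_log hK0, Real.exp_neg]; ring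
    rw [sub_neg, this, show (1:ℝ) = Real.exp 0 by simp, Real.exp_lt_exp]
    constructor
    · intro h
      have hr2 : r ^ 2 < Real.log K := by linarith
      exact (Real.lt_sqrt hr).mpr hr2
    · intro h
      have hr2 : r ^ 2 < Real.log K := (Real.lt_sqrt hr).mp h
      linarith
  refine ⟨key, ?_⟩
  intro N _ x hx hxr
  have hneg : 1 - 2 * C / β * Real.exp (-‖x‖ ^ 2) < 0 :=
    (key ‖x‖ (norm_nonneg x)).mpr hxr
  rw [real_inner_smul_left, real_inner_smul_right, real_inner_self_eq_norm_sq]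
  have hC0 : 0 < C := by
    have : 0 < 1 + s := by linarith
    positivity
  have hx2 : 0 < ‖x‖ ^ 2 := by positivity
  have he : 0 < Real.exp (‖x‖ ^ 2) := Real.exp_pos _
  nlinarith [mul_pos (mul_pos (mul_pos (by linarith : (0:ℝ) < 2 * C) he) hx2) hx2,
    mul_pos hx2 hx2]
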